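/- arXiv:1309.7567 — 6 statements merged into one kernel-verified Lean document; each statement's English description precedes it below -/
import Mathlib

section
/- For every integer n ≥ 3, f(n+1) = f(n) or f(n+1) = f(n) + 1. -/
noncomputable def f (n : ℕ) : ℕ :=
  sInf {k : ℕ | 0 < k ∧ (n.choose k : ℝ) > 2 ^ n / (n + 1)}

lemma two_pow_lt_central (n : ℕ) (hn : 3 ≤ n) :
    2 ^ n < (n + 1) * n.choose (n / 2) := by
  obtain ⟨m, rfl | rfl⟩ := Nat.even_or_odd' n
  · -- n = 2m
    have hm : 2 ≤ m := by omega
    have h1 : 4 ^ m ≤ 2 * m * Nat.centralBinom m :=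
      Nat.four_pow_le_two_mul_self_mul_centralBinom m (by omega)
    have hpos : 0 < Nat.centralBinom m := Nat.centralBinom_pos m
    have hdiv : 2 * m / 2 = m := by omega
    have hcb : (2 * m).choose m = Nat.centralBinom m := rfl
    rw [hdiv, hcb]
    have hpow : 2 ^ (2 * m) = 4 ^ m := by
      rw [pow_mul]; norm_num
    rw [hpow]
    calc 4 ^ m ≤ 2 * m * Nat.centralBinom m := h1
      _ < (2 * m + 1) * Nat.centralBinom m :=
          Nat.mul_lt_mul_of_lt_of_le (by omega) le_rfl hpos
  · -- n = 2m+1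
    have hm : 1 ≤ m := by omega
    have key : 4 ^ (m + 1) < 2 * (m + 1) * Nat.centralBinom (m + 1) := by
      rcases le_or_gt 4 (m + 1) with h4 | h4
      · calc 4 ^ (m + 1) < (m + 1) * Nat.centralBinom (m + 1) :=
              Nat.four_pow_lt_mul_centralBinom (m + 1) h4
          _ ≤ 2 * (m + 1) * Nat.centralBinom (m + 1) := by
              apply Nat.mul_le_mul_right; omega
      · have hub : m ≤ 2 := by omega
        interval_cases m <;> decide
    have hdiv : (2 * m + 1) / 2 = m := by omega
    rw [hdiv]
    have h2 : (2 * m + 1 + 1) * (2 * m + 1).choose m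
        = (2 * m + 1 + 1).choose (m + 1) * (m + 1) :=
      Nat.add_one_mul_choose_eq (2 * m + 1) m
    have hcb : (2 * m + 1 + 1).choose (m + 1) = Nat.centralBinom (m + 1) := by
      have h22 : 2 * m + 1 + 1 = 2 * (m + 1) := by ring
      rw [h22]; rfl
    rw [hcb] at h2
    have h4 : 2 * 2 ^ (2 * m + 1) = 4 ^ (m + 1) := by
      rw [show (4:ℕ) = 2 ^ 2 from rfl, ← pow_mul,
        show 2 * (m + 1) = (2 * m + 1) + 1 from by ring, pow_succ]
      ring
    have key2 : 2 * (2 ^ (2 * m + 1)) < 2 * ((2 * m + 1 + 1) * (2 * m + 1).choose m) := by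
      rw [h4, h2]
      linarith [key]
    omega

lemma central_mem (n : ℕ) (hn : 3 ≤ n) :
    n / 2 ∈ {k : ℕ | 0 < k ∧ (n.choose k : ℝ) > 2 ^ n / (n + 1)} := by
  refine ⟨by omega, ?_⟩
  rw [gt_iff_lt, div_lt_iff₀ (by positivity)]
  have := two_pow_lt_central n hn
  have hcast : (2:ℝ) ^ n < ((n:ℝ) + 1) * (n.choose (n / 2) : ℝ) := by
    exact_mod_cast this
  linarith

lemma f_mem (n : ℕ) (hn : 3 ≤ n) :
    0 < f n ∧ (n.choose (f n) : ℝ) > 2 ^ n / (n + 1) :=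
  Nat.sInf_mem ⟨n / 2, central_mem n hn⟩

lemma f_le {n k : ℕ} (hk : 0 < k) (h : (n.choose k : ℝ) > 2 ^ n / (n + 1)) :
    f n ≤ k :=
  Nat.sInf_le ⟨hk, h⟩

theorem f_succ_eq_or_succ (n : ℕ) (hn : 3 ≤ n) :
    f (n + 1) = f n ∨ f (n + 1) = f n + 1 := by
  obtain ⟨ha0, haC⟩ := f_mem n hn
  obtain ⟨hb0, hbC⟩ := f_mem (n + 1) (by omega)
  set a := f n with hadef
  set b := f (n + 1) with hbdef
  have ha_le : a ≤ n / 2 := f_le (by omega) (central_mem n hn).2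
  have hC : (2:ℝ) ^ n < (n.choose a : ℝ) * ((n:ℝ) + 1) := by
    rw [gt_iff_lt, div_lt_iff₀ (by positivity)] at haC
    exact haC
  have hbC' : (2:ℝ) ^ (n + 1) < ((n + 1).choose b : ℝ) * ((n:ℝ) + 2) := by
    rw [gt_iff_lt, div_lt_iff₀ (by positivity)] at hbC
    push_cast at hbC
    linarith
  -- Step 1 : b ≤ a + 1
  have hstep1 : b ≤ a + 1 := by
    apply f_le (by omega)
    have hkey : (n + 1) * n.choose a = (n + 1).choose (a + 1) * (a + 1) :=
      Nat.add_one_mul_choose_eq n a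
    have hkeyR : ((n:ℝ) + 1) * (n.choose a : ℝ)
        = ((n + 1).choose (a + 1) : ℝ) * ((a:ℝ) + 1) := by
      exact_mod_cast hkey
    have h2a : 2 * ((a:ℝ) + 1) ≤ (n:ℝ) + 2 := by
      have h : 2 * (a + 1) ≤ n + 2 := by
        have := Nat.div_mul_le_self n 2
        omega
      exact_mod_cast h
    rw [gt_iff_lt, div_lt_iff₀ (by positivity)]
    push_cast
    -- goal : 2^(n+1) < C' * (n+2)
    have hpos : (0:ℝ) < (a:ℝ) + 1 := by positivity
    have hpow : (0:ℝ) < (2:ℝ) ^ n := by positivity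
    rw [← mul_lt_mul_iff_of_pos_right hpos]
    have e1 : (2:ℝ) ^ (n + 1) * ((a:ℝ) + 1) = 2 ^ n * (2 * ((a:ℝ) + 1)) := by ring
    have e2 : (2:ℝ) ^ n * (2 * ((a:ℝ) + 1)) ≤ 2 ^ n * ((n:ℝ) + 2) :=
      mul_le_mul_of_nonneg_left h2a hpow.le
    have e3 : (2:ℝ) ^ n * ((n:ℝ) + 2)
        < (n.choose a : ℝ) * ((n:ℝ) + 1) * ((n:ℝ) + 2) :=
      mul_lt_mul_of_pos_right hC (by positivity)
    have e4 : ((n + 1).choose (a + 1) : ℝ) * ((n:ℝ) + 2) * ((a:ℝ) + 1)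
        = ((n:ℝ) + 1) * (n.choose a : ℝ) * ((n:ℝ) + 2) := by
      linear_combination (-((n:ℝ) + 2)) * hkeyR
    nlinarith [e1, e2, e3, e4]
  -- Step 2 : a ≤ b
  have hstep2 : a ≤ b := by
    rcases le_or_gt (2 * b) n with hcase | hcase
    · apply f_le hb0
      have hbn : b ≤ n := by omega
      have hkey : n.choose b * (n + 1) = (n + 1).choose b * (n + 1 - b) :=
        Nat.choose_mul_succ_eq n b
      have hsub : ((n + 1 - b : ℕ) : ℝ) = (n:ℝ) + 1 - (b:ℝ) := by
        have hb' : b ≤ n + 1 := by omega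
        rw [Nat.cast_sub hb']
        push_cast
        ring
      have hkeyR : (n.choose b : ℝ) * ((n:ℝ) + 1)
          = ((n + 1).choose b : ℝ) * ((n:ℝ) + 1 - (b:ℝ)) := by
        rw [← hsub]
        exact_mod_cast hkey
      have h2b : (n:ℝ) + 2 ≤ 2 * ((n:ℝ) + 1 - (b:ℝ)) := by
        have h : (2 * b : ℝ) ≤ (n:ℝ) := by exact_mod_cast hcase
        linarith
      have hCpos : (0:ℝ) < ((n + 1).choose b : ℝ) := by
        have hp : (0:ℝ) < (2:ℝ) ^ (n + 1) := by positivity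
        nlinarith [hbC', hp]
      rw [gt_iff_lt, div_lt_iff₀ (by positivity)]
      rw [hkeyR]
      have hp1 : (2:ℝ) ^ (n + 1) = 2 * 2 ^ n := by ring
      have hp2 : ((n + 1).choose b : ℝ) * ((n:ℝ) + 2)
          ≤ ((n + 1).choose b : ℝ) * (2 * ((n:ℝ) + 1 - (b:ℝ))) :=
        mul_le_mul_of_nonneg_left h2b hCpos.le
      nlinarith [hbC', hp2]
    · have : n / 2 ≤ b := by omega
      omega
  omega
end

section
/- Let n ≥ 3 be an integer and suppose C(n, L(n) − 1) > 2^n/(n+1). Then f(n) = f(n−1) = f(n−2) = L(n) − 1 and L(n) = L(n+1) = L(n+2) = f(n) + 1. -/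
noncomputable def L (n : ℕ) : ℕ :=
  sInf {k : ℕ | 0 < k ∧ (n.choose k : ℝ) > 2 ^ n / n}

private lemma mem_iff {c d m : ℕ} (hd : 0 < d) :
    ((c : ℝ) > 2 ^ m / (d : ℝ)) ↔ 2 ^ m < d * c := by
  rw [gt_iff_lt, div_lt_iff₀ (by exact_mod_cast hd), mul_comm]
  exact_mod_cast Iff.rfl

private lemma f_eq {m a : ℕ} (ha : 0 < a) (hmem : 2 ^ m < (m + 1) * m.choose a)
    (hmin : ∀ k, 0 < k → k < a → (m + 1) * m.choose k ≤ 2 ^ m) : f m = a := by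
  have key : ∀ k : ℕ, ((m.choose k : ℝ) > 2 ^ m / ((m : ℝ) + 1)) ↔
      2 ^ m < (m + 1) * m.choose k := by
    intro k
    rw [show ((m : ℝ) + 1) = ((m + 1 : ℕ) : ℝ) by push_cast; ring]
    exact mem_iff (Nat.succ_pos m)
  have hset : {k : ℕ | 0 < k ∧ (m.choose k : ℝ) > 2 ^ m / ((m : ℝ) + 1)} =
      {k : ℕ | 0 < k ∧ 2 ^ m < (m + 1) * m.choose k} := by
    ext k; exact and_congr_right fun _ => key k
  rw [f, hset]
  refine le_antisymm (Nat.sInf_le ⟨ha, hmem⟩) (le_csInf ⟨a, ha, hmem⟩ ?_)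
  rintro k ⟨hk, hgt⟩
  by_contra hlt
  exact absurd hgt (not_lt.2 (hmin k hk (by omega)))

private lemma L_eq {m a : ℕ} (hm : 0 < m) (ha : 0 < a) (hmem : 2 ^ m < m * m.choose a)
    (hmin : ∀ k, 0 < k → k < a → m * m.choose k ≤ 2 ^ m) : L m = a := by
  have key : ∀ k : ℕ, ((m.choose k : ℝ) > 2 ^ m / (m : ℝ)) ↔
      2 ^ m < m * m.choose k := fun k => mem_iff hm
  have hset : {k : ℕ | 0 < k ∧ (m.choose k : ℝ) > 2 ^ m / (m : ℝ)} =
      {k : ℕ | 0 < k ∧ 2 ^ m < m * m.choose k} := by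
    ext k; exact and_congr_right fun _ => key k
  rw [L, hset]
  refine le_antisymm (Nat.sInf_le ⟨ha, hmem⟩) (le_csInf ⟨a, ha, hmem⟩ ?_)
  rintro k ⟨hk, hgt⟩
  by_contra hlt
  exact absurd hgt (not_lt.2 (hmin k hk (by omega)))

private lemma cross (m k : ℕ) : (m + 1).choose k * (m + 1 - k) = (m + 1) * m.choose k := by
  rw [← Nat.choose_succ_right_eq]
  exact (Nat.add_one_mul_choose_eq m k).symm

private lemma cross' {M : ℕ} (hM : 0 < M) (k : ℕ) :
    M.choose k * (M - k) = M * (M - 1).choose k := by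
  obtain ⟨m, rfl⟩ : ∃ m, M = m + 1 := ⟨M - 1, by omega⟩
  simpa using cross m k

private lemma choose_mono_half {m k j : ℕ} (hkj : k ≤ j) (hj : 2 * j ≤ m) :
    m.choose k ≤ m.choose j := by
  induction j with
  | zero => simp_all
  | succ j ih =>
    rcases Nat.eq_or_lt_of_le hkj with rfl | hlt
    · exact le_rfl
    · exact (ih (by omega) (by omega)).trans
        (Nat.choose_le_succ_of_lt_half_left (by omega))

private lemma succ_lt_two_pow {n : ℕ} (hn : 3 ≤ n) : n + 1 < 2 ^ n := by
  induction n, hn using Nat.le_induction with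
  | base => norm_num
  | succ k hk ih => rw [pow_succ]; omega

private lemma central_gt {n : ℕ} (hn : 3 ≤ n) : 2 ^ n < n * n.choose (n / 2) := by
  obtain ⟨m, rfl⟩ : ∃ m, n = m + 1 := ⟨n - 1, by omega⟩
  have hsum := Nat.sum_range_choose (m + 1)
  have h1 : ∑ i ∈ Finset.range (m + 2), (m + 1).choose i
      = (∑ i ∈ Finset.range (m + 1), (m + 1).choose (i + 1)) + 1 := by
    rw [Finset.sum_range_succ']; simp
  have h2 : ∑ i ∈ Finset.range (m + 1), (m + 1).choose (i + 1)
      = (∑ i ∈ Finset.range m, (m + 1).choose (i + 1)) + 1 := by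
    rw [Finset.sum_range_succ, Nat.choose_self]
  have h3 : ∑ i ∈ Finset.range m, (m + 1).choose (i + 1) ≤ m * (m + 1).choose ((m + 1) / 2) := by
    calc ∑ i ∈ Finset.range m, (m + 1).choose (i + 1)
        ≤ ∑ _i ∈ Finset.range m, (m + 1).choose ((m + 1) / 2) :=
          Finset.sum_le_sum fun i _ => Nat.choose_le_middle _ _
      _ = m * (m + 1).choose ((m + 1) / 2) := by
          rw [Finset.sum_const, smul_eq_mul, Finset.card_range]
  have h4 : 3 ≤ (m + 1).choose ((m + 1) / 2) := by
    have := Nat.choose_le_middle 1 (m + 1)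
    rw [Nat.choose_one_right] at this
    omega
  have h5 : (m + 1) * (m + 1).choose ((m + 1) / 2)
      = m * (m + 1).choose ((m + 1) / 2) + (m + 1).choose ((m + 1) / 2) := by ring
  have h6 : 2 ^ (m + 1) = (∑ i ∈ Finset.range m, (m + 1).choose (i + 1)) + 2 := by
    rw [← hsum, h1, h2]
  linarith


private lemma aux_q1 {a u : ℕ} (hua : a + 2 ≤ u) :
    (a + u + 1) * a ≤ (a + u) * (u + 1) := by
  have hzu : (a : ℤ) + 2 ≤ (u : ℤ) := by exact_mod_cast hua
  have hprod : ((a : ℤ) + 2) * ((a : ℤ) + 2) ≤ (u : ℤ) * (u : ℤ) :=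
    mul_le_mul hzu hzu (by positivity) (by positivity)
  zify
  nlinarith [hzu, hprod]

private lemma aux_q2 {a u : ℕ} (hua : a + 2 ≤ u) :
    (a + u + 1) * (a + u + 1) ≤ 2 * ((a + u) * (u + 1)) := by
  have hzu : (a : ℤ) + 2 ≤ (u : ℤ) := by exact_mod_cast hua
  have hprod : ((a : ℤ) + 2) * ((a : ℤ) + 2) ≤ (u : ℤ) * (u : ℤ) :=
    mul_le_mul hzu hzu (by positivity) (by positivity)
  zify
  nlinarith [hzu, hprod]

private lemma aux_q3 {a u : ℕ} (hua : a + 2 ≤ u) :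
    4 * ((a + u + 1) * ((a + 1) * (u + 1)))
      ≤ (a + u + 2) * (a * (a + 1) + 2 * ((a + 1) * (u + 1)) + u * (u + 1)) := by
  zify
  nlinarith [mul_nonneg (show (0:ℤ) ≤ (a:ℤ) + (u:ℤ) + 1 by positivity)
    (sq_nonneg ((u : ℤ) - (a : ℤ)))]

private lemma aux_q4 {a u : ℕ} (hua : a + 2 ≤ u) :
    (a + u + 1) * ((a + u + 2) * (a + u + 2)) ≤ 4 * ((a + u) * ((u + 1) * (u + 2))) := by
  have hzu : (a : ℤ) + 2 ≤ (u : ℤ) := by exact_mod_cast hua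
  have hprod : ((a : ℤ) + 2) * ((a : ℤ) + 2) ≤ (u : ℤ) * (u : ℤ) :=
    mul_le_mul hzu hzu (by positivity) (by positivity)
  zify
  nlinarith [hzu, hprod,
    mul_nonneg (mul_nonneg (show (0:ℤ) ≤ (a:ℤ) + u by positivity)
      (show (0:ℤ) ≤ (u:ℤ) - a - 2 by omega)) (show (0:ℤ) ≤ (u:ℤ) by positivity),
    mul_nonneg (show (0:ℤ) ≤ (a:ℤ) by positivity) (show (0:ℤ) ≤ (u:ℤ) by positivity)]

private lemma aux_q6 {a u : ℕ} (hua : a + 2 ≤ u) :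
    4 * (a * u) ≤ (a + u) * (a + u) := by
  zify
  nlinarith [sq_nonneg ((u : ℤ) - (a : ℤ))]

set_option maxHeartbeats 1000000 in
theorem f_L_stability (n : ℕ) (hn : 3 ≤ n)
    (h : (n.choose (L n - 1) : ℝ) > 2 ^ n / (n + 1)) :
    f n = L n - 1 ∧ f (n - 1) = L n - 1 ∧ f (n - 2) = L n - 1 ∧
    L n = f n + 1 ∧ L (n + 1) = f n + 1 ∧ L (n + 2) = f n + 1 := by
  obtain ⟨m, rfl⟩ : ∃ m, n = m + 2 := ⟨n - 2, by omega⟩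
  have hm1 : 1 ≤ m := by omega
  have hkey : ∀ k : ℕ, (((m + 2).choose k : ℝ) > 2 ^ (m + 2) / ((m + 2 : ℕ) : ℝ)) ↔
      2 ^ (m + 2) < (m + 2) * (m + 2).choose k := fun k => mem_iff (by omega)
  have hLdef : L (m + 2) = sInf {k : ℕ | 0 < k ∧
      ((m + 2).choose k : ℝ) > 2 ^ (m + 2) / ((m + 2 : ℕ) : ℝ)} := rfl
  have hne : {k : ℕ | 0 < k ∧
      ((m + 2).choose k : ℝ) > 2 ^ (m + 2) / ((m + 2 : ℕ) : ℝ)}.Nonempty :=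
    ⟨(m + 2) / 2, by omega, (hkey _).2 (central_gt (by omega))⟩
  have hLmem := Nat.sInf_mem hne
  rw [← hLdef] at hLmem
  have hLpos : 0 < L (m + 2) := hLmem.1
  have hLB0 : 2 ^ (m + 2) < (m + 2) * (m + 2).choose (L (m + 2)) := (hkey _).1 hLmem.2
  have hLhalf : L (m + 2) ≤ (m + 2) / 2 := by
    rw [hLdef]
    exact Nat.sInf_le ⟨by omega, (hkey _).2 (central_gt (by omega))⟩
  have hLmin : ∀ k, 0 < k → k < L (m + 2) → (m + 2) * (m + 2).choose k ≤ 2 ^ (m + 2) := by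
    intro k hk hklt
    by_contra hgt
    push_neg at hgt
    have hmem : k ∈ {k : ℕ | 0 < k ∧
        ((m + 2).choose k : ℝ) > 2 ^ (m + 2) / ((m + 2 : ℕ) : ℝ)} := ⟨hk, (hkey k).2 hgt⟩
    exact Nat.notMem_of_lt_sInf (by rw [← hLdef]; exact hklt) hmem
  have hA0 : 2 ^ (m + 2) < (m + 3) * (m + 2).choose (L (m + 2) - 1) := by
    rw [show ((m + 2 : ℕ) : ℝ) + 1 = ((m + 3 : ℕ) : ℝ) by push_cast; ring] at h
    exact (mem_iff (by omega)).1 h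
  have hL2 : 2 ≤ L (m + 2) := by
    by_contra hc
    have hL1 : L (m + 2) - 1 = 0 := by omega
    rw [hL1, Nat.choose_zero_right, Nat.mul_one] at hA0
    have := succ_lt_two_pow (n := m + 2) (by omega)
    omega
  obtain ⟨b, hLb⟩ : ∃ b, L (m + 2) = b + 2 := ⟨L (m + 2) - 2, by omega⟩
  obtain ⟨a, hab⟩ : ∃ a, a = b + 1 := ⟨b + 1, rfl⟩
  have hLa : L (m + 2) - 1 = a := by omega
  rw [hLa] at hA0 ⊢
  have hL1 : L (m + 2) = a + 1 := by omega
  rw [hL1] at hLB0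
  obtain ⟨u, hu⟩ : ∃ u, m + 2 = a + u := ⟨m + 2 - a, by omega⟩
  have hua : a + 2 ≤ u := by omega
  obtain ⟨v, hv⟩ : ∃ v, u = v + 1 := ⟨u - 1, by omega⟩
  -- key numeric facts
  have hA : 2 ^ (m + 2) < (m + 3) * (m + 2).choose a := hA0
  have hAn : (m + 2) * (m + 2).choose a ≤ 2 ^ (m + 2) := hLmin a (by omega) (by omega)
  -- identities
  have id1 : (m + 2).choose (a + 1) * (a + 1) = (m + 2).choose a * u := by
    have hh := Nat.choose_succ_right_eq (m + 2) a
    rwa [show m + 2 - a = u by omega] at hh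
  have id2 : (m + 2).choose a * a = (m + 2).choose b * (u + 1) := by
    have hh := Nat.choose_succ_right_eq (m + 2) b
    rwa [show m + 2 - b = u + 1 by omega, show b + 1 = a by omega] at hh
  have c1 : (m + 2).choose a * u = (m + 2) * (m + 1).choose a := by
    have hh := cross' (M := m + 2) (by omega) a
    rwa [show m + 2 - a = u by omega, show m + 2 - 1 = m + 1 by omega] at hh
  have c2 : (m + 2).choose b * (u + 1) = (m + 2) * (m + 1).choose b := by
    have hh := cross' (M := m + 2) (by omega) b
    rwa [show m + 2 - b = u + 1 by omega, show m + 2 - 1 = m + 1 by omega] at hh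
  have c3 : (m + 1).choose a * v = (m + 1) * m.choose a := by
    have hh := cross' (M := m + 1) (by omega) a
    rwa [show m + 1 - a = v by omega, show m + 1 - 1 = m by omega] at hh
  have c4 : (m + 1).choose b * u = (m + 1) * m.choose b := by
    have hh := cross' (M := m + 1) (by omega) b
    rwa [show m + 1 - b = u by omega, show m + 1 - 1 = m by omega] at hh
  have c5 : (m + 3).choose a * (u + 1) = (m + 3) * (m + 2).choose a := by
    have hh := cross' (M := m + 3) (by omega) a
    rwa [show m + 3 - a = u + 1 by omega, show m + 3 - 1 = m + 2 by omega] at hh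
  have c6 : (m + 4).choose a * (u + 2) = (m + 4) * (m + 3).choose a := by
    have hh := cross' (M := m + 4) (by omega) a
    rwa [show m + 4 - a = u + 2 by omega, show m + 4 - 1 = m + 3 by omega] at hh
  have p1 : (m + 3).choose (a + 1) = (m + 2).choose a + (m + 2).choose (a + 1) :=
    Nat.choose_succ_succ (m + 2) a
  have p2 : (m + 3).choose a = (m + 2).choose b + (m + 2).choose a := by
    have hh : (m + 3).choose (b + 1) = (m + 2).choose b + (m + 2).choose (b + 1) :=
      Nat.choose_succ_succ (m + 2) b
    rwa [← hab] at hh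
  have p3 : (m + 4).choose (a + 1) = (m + 3).choose a + (m + 3).choose (a + 1) :=
    Nat.choose_succ_succ (m + 3) a
  have hBA : (m + 2).choose a ≤ (m + 2).choose (a + 1) := by
    refine Nat.le_of_mul_le_mul_right ?_ (show 0 < a + 1 by omega)
    calc (m + 2).choose a * (a + 1) ≤ (m + 2).choose a * u :=
          Nat.mul_le_mul le_rfl (by omega)
      _ = (m + 2).choose (a + 1) * (a + 1) := id1.symm
  -- polynomial inequalities
  have q1 : (m + 3) * a ≤ (m + 2) * (u + 1) := by
    rw [show m + 3 = a + u + 1 by omega, show m + 2 = a + u from hu]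
    exact aux_q1 hua
  have q2 : (m + 3) * (m + 3) ≤ 2 * ((m + 2) * (u + 1)) := by
    rw [show m + 3 = a + u + 1 by omega, show m + 2 = a + u from hu]
    exact aux_q2 hua
  have q3 : 4 * ((m + 3) * ((a + 1) * (u + 1)))
      ≤ (m + 4) * (a * (a + 1) + 2 * ((a + 1) * (u + 1)) + u * (u + 1)) := by
    rw [show m + 3 = a + u + 1 by omega, show m + 4 = a + u + 2 by omega]
    exact aux_q3 hua
  have q4 : (m + 3) * ((m + 4) * (m + 4)) ≤ 4 * ((m + 2) * ((u + 1) * (u + 2))) := by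
    rw [show m + 3 = a + u + 1 by omega, show m + 4 = a + u + 2 by omega,
      show m + 2 = a + u from hu]
    exact aux_q4 hua
  have q5 : (m + 2) * (m + 3) ≤ 4 * (u * v) := by
    calc (m + 2) * (m + 3) ≤ (2 * v) * (2 * u) := Nat.mul_le_mul (by omega) (by omega)
      _ = 4 * (u * v) := by ring
  have q6 : 4 * (a * u) ≤ (m + 2) * (m + 2) := by
    rw [show m + 2 = a + u from hu]
    exact aux_q6 hua
  -- Part 1 : f (m+2) = a
  have hf0 : f (m + 2) = a := by
    refine f_eq (by omega) hA ?_
    intro k hk hka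
    have mono : (m + 2).choose k ≤ (m + 2).choose b := choose_mono_half (by omega) (by omega)
    have hub : (m + 3) * (m + 2).choose b ≤ 2 ^ (m + 2) := by
      refine Nat.le_of_mul_le_mul_right ?_ (show 0 < (m + 2) * (u + 1) by positivity)
      calc (m + 3) * (m + 2).choose b * ((m + 2) * (u + 1))
          = ((m + 3) * (m + 2)) * ((m + 2).choose b * (u + 1)) := by ring
        _ = ((m + 3) * (m + 2)) * ((m + 2).choose a * a) := by rw [← id2]
        _ = ((m + 3) * a) * ((m + 2) * (m + 2).choose a) := by ring
        _ ≤ ((m + 3) * a) * 2 ^ (m + 2) := Nat.mul_le_mul le_rfl hAn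
        _ ≤ ((m + 2) * (u + 1)) * 2 ^ (m + 2) := Nat.mul_le_mul q1 le_rfl
        _ = 2 ^ (m + 2) * ((m + 2) * (u + 1)) := by ring
    calc (m + 2 + 1) * (m + 2).choose k ≤ (m + 3) * (m + 2).choose b :=
          Nat.mul_le_mul le_rfl mono
      _ ≤ 2 ^ (m + 2) := hub
  -- Part 2 : f (m+1) = a
  have hf1 : f (m + 1) = a := by
    refine f_eq (by omega) ?_ ?_
    · show 2 ^ (m + 1) < (m + 2) * (m + 1).choose a
      rw [← c1]
      refine Nat.lt_of_mul_lt_mul_left (a := 2) ?_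
      calc 2 * 2 ^ (m + 1) = 2 ^ (m + 2) := by ring
        _ < (m + 3) * (m + 2).choose a := hA
        _ ≤ (2 * u) * (m + 2).choose a := Nat.mul_le_mul (by omega) le_rfl
        _ = 2 * ((m + 2).choose a * u) := by ring
    · intro k hk hka
      have mono : (m + 1).choose k ≤ (m + 1).choose b := choose_mono_half (by omega) (by omega)
      have e : (m + 2) * (m + 1).choose b = (m + 2).choose a * a := by
        rw [← c2, ← id2]
      have hub : (m + 2) * (m + 1).choose b ≤ 2 ^ (m + 1) := by
        rw [e]
        refine Nat.le_of_mul_le_mul_left ?_ (show 0 < 2 by omega)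
        calc 2 * ((m + 2).choose a * a) = (2 * a) * (m + 2).choose a := by ring
          _ ≤ (m + 2) * (m + 2).choose a := Nat.mul_le_mul (by omega) le_rfl
          _ ≤ 2 ^ (m + 2) := hAn
          _ = 2 * 2 ^ (m + 1) := by ring
      calc (m + 1 + 1) * (m + 1).choose k ≤ (m + 2) * (m + 1).choose b :=
            Nat.mul_le_mul le_rfl mono
        _ ≤ 2 ^ (m + 1) := hub
  -- Part 3 : f m = a
  have hf2 : f m = a := by
    refine f_eq (by omega) ?_ ?_
    · show 2 ^ m < (m + 1) * m.choose a
      have e3 : (m + 2) * ((m + 1) * m.choose a) = (m + 2).choose a * u * v := by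
        calc (m + 2) * ((m + 1) * m.choose a) = (m + 2) * ((m + 1).choose a * v) := by rw [c3]
          _ = ((m + 2) * (m + 1).choose a) * v := by ring
          _ = ((m + 2).choose a * u) * v := by rw [c1]
      have h4 : 4 * ((m + 2) * 2 ^ m) < 4 * ((m + 2).choose a * u * v) := by
        calc 4 * ((m + 2) * 2 ^ m) = (m + 2) * 2 ^ (m + 2) := by ring
          _ < (m + 2) * ((m + 3) * (m + 2).choose a) :=
              mul_lt_mul_of_pos_left hA (by omega)
          _ = ((m + 2) * (m + 3)) * (m + 2).choose a := by ring
          _ ≤ (4 * (u * v)) * (m + 2).choose a := Nat.mul_le_mul q5 le_rfl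
          _ = 4 * ((m + 2).choose a * u * v) := by ring
      have h5 : (m + 2) * 2 ^ m < (m + 2) * ((m + 1) * m.choose a) := by
        rw [e3]
        exact Nat.lt_of_mul_lt_mul_left h4
      exact Nat.lt_of_mul_lt_mul_left h5
    · intro k hk hka
      have mono : m.choose k ≤ m.choose b := choose_mono_half (by omega) (by omega)
      have e4 : (m + 2) * ((m + 1) * m.choose b) = (m + 2).choose a * a * u := by
        calc (m + 2) * ((m + 1) * m.choose b) = (m + 2) * ((m + 1).choose b * u) := by rw [c4]
          _ = ((m + 2) * (m + 1).choose b) * u := by ring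
          _ = ((m + 2).choose b * (u + 1)) * u := by rw [c2]
          _ = ((m + 2).choose a * a) * u := by rw [← id2]
      have hub : (m + 1) * m.choose b ≤ 2 ^ m := by
        have h6 : 4 * ((m + 2) * ((m + 1) * m.choose b)) ≤ 4 * ((m + 2) * 2 ^ m) := by
          calc 4 * ((m + 2) * ((m + 1) * m.choose b))
              = 4 * ((m + 2).choose a * a * u) := by rw [e4]
            _ = (4 * (a * u)) * (m + 2).choose a := by ring
            _ ≤ ((m + 2) * (m + 2)) * (m + 2).choose a := Nat.mul_le_mul q6 le_rfl
            _ = (m + 2) * ((m + 2) * (m + 2).choose a) := by ring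
            _ ≤ (m + 2) * 2 ^ (m + 2) := Nat.mul_le_mul le_rfl hAn
            _ = 4 * ((m + 2) * 2 ^ m) := by ring
        have h7 := Nat.le_of_mul_le_mul_left h6 (by omega)
        exact Nat.le_of_mul_le_mul_left h7 (by omega)
      calc (m + 1) * m.choose k ≤ (m + 1) * m.choose b := Nat.mul_le_mul le_rfl mono
        _ ≤ 2 ^ m := hub
  -- Part 5 : L (m+3) = a + 1
  have hL3 : L (m + 3) = a + 1 := by
    refine L_eq (by omega) (by omega) ?_ ?_
    · calc 2 ^ (m + 3) = 2 * 2 ^ (m + 2) := by ring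
        _ < 2 * ((m + 3) * (m + 2).choose a) := mul_lt_mul_of_pos_left hA (by omega)
        _ = (m + 3) * (2 * (m + 2).choose a) := by ring
        _ ≤ (m + 3) * ((m + 2).choose a + (m + 2).choose (a + 1)) :=
            Nat.mul_le_mul le_rfl (by omega)
        _ = (m + 3) * (m + 3).choose (a + 1) := by rw [← p1]
    · intro k hk hka
      have mono : (m + 3).choose k ≤ (m + 3).choose a := choose_mono_half (by omega) (by omega)
      have hub : (m + 3) * (m + 3).choose a ≤ 2 ^ (m + 3) := by
        refine Nat.le_of_mul_le_mul_left ?_ (show 0 < (m + 2) * (u + 1) by positivity)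
        calc ((m + 2) * (u + 1)) * ((m + 3) * (m + 3).choose a)
            = ((m + 2) * (m + 3)) * ((m + 3).choose a * (u + 1)) := by ring
          _ = ((m + 2) * (m + 3)) * ((m + 3) * (m + 2).choose a) := by rw [c5]
          _ = ((m + 3) * (m + 3)) * ((m + 2) * (m + 2).choose a) := by ring
          _ ≤ ((m + 3) * (m + 3)) * 2 ^ (m + 2) := Nat.mul_le_mul le_rfl hAn
          _ ≤ (2 * ((m + 2) * (u + 1))) * 2 ^ (m + 2) := Nat.mul_le_mul q2 le_rfl
          _ = ((m + 2) * (u + 1)) * 2 ^ (m + 3) := by ring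
      exact le_trans (Nat.mul_le_mul le_rfl mono) hub
  -- Part 6 : L (m+4) = a + 1
  have hL4 : L (m + 4) = a + 1 := by
    refine L_eq (by omega) (by omega) ?_ ?_
    · have E : (m + 4).choose (a + 1)
          = (m + 2).choose b + 2 * (m + 2).choose a + (m + 2).choose (a + 1) := by
        rw [p3, p2, p1]; ring
      have idQ : (m + 2).choose a * (a * (a + 1) + 2 * ((a + 1) * (u + 1)) + u * (u + 1))
          = ((m + 2).choose b + 2 * (m + 2).choose a + (m + 2).choose (a + 1))
            * ((a + 1) * (u + 1)) := by
        calc (m + 2).choose a * (a * (a + 1) + 2 * ((a + 1) * (u + 1)) + u * (u + 1))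
            = ((m + 2).choose a * a) * (a + 1) + 2 * (m + 2).choose a * ((a + 1) * (u + 1))
              + ((m + 2).choose a * u) * (u + 1) := by ring
          _ = ((m + 2).choose b * (u + 1)) * (a + 1)
              + 2 * (m + 2).choose a * ((a + 1) * (u + 1))
              + ((m + 2).choose (a + 1) * (a + 1)) * (u + 1) := by rw [id2, ← id1]
          _ = ((m + 2).choose b + 2 * (m + 2).choose a + (m + 2).choose (a + 1))
              * ((a + 1) * (u + 1)) := by ring
      refine Nat.lt_of_mul_lt_mul_left (a := (a + 1) * (u + 1)) ?_
      calc ((a + 1) * (u + 1)) * 2 ^ (m + 4)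
          = (4 * ((a + 1) * (u + 1))) * 2 ^ (m + 2) := by ring
        _ < (4 * ((a + 1) * (u + 1))) * ((m + 3) * (m + 2).choose a) :=
            mul_lt_mul_of_pos_left hA (by positivity)
        _ = (4 * ((m + 3) * ((a + 1) * (u + 1)))) * (m + 2).choose a := by ring
        _ ≤ ((m + 4) * (a * (a + 1) + 2 * ((a + 1) * (u + 1)) + u * (u + 1)))
            * (m + 2).choose a := Nat.mul_le_mul q3 le_rfl
        _ = (m + 4) * ((m + 2).choose a
            * (a * (a + 1) + 2 * ((a + 1) * (u + 1)) + u * (u + 1))) := by ring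
        _ = (m + 4) * (((m + 2).choose b + 2 * (m + 2).choose a + (m + 2).choose (a + 1))
            * ((a + 1) * (u + 1))) := by rw [idQ]
        _ = ((a + 1) * (u + 1)) * ((m + 4) * (m + 4).choose (a + 1)) := by rw [E]; ring
    · intro k hk hka
      have mono : (m + 4).choose k ≤ (m + 4).choose a := choose_mono_half (by omega) (by omega)
      have hub : (m + 4) * (m + 4).choose a ≤ 2 ^ (m + 4) := by
        refine Nat.le_of_mul_le_mul_left ?_
          (show 0 < (m + 2) * ((u + 1) * (u + 2)) by positivity)
        calc ((m + 2) * ((u + 1) * (u + 2))) * ((m + 4) * (m + 4).choose a)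
            = ((m + 2) * (u + 1) * (m + 4)) * ((m + 4).choose a * (u + 2)) := by ring
          _ = ((m + 2) * (u + 1) * (m + 4)) * ((m + 4) * (m + 3).choose a) := by rw [c6]
          _ = ((m + 2) * (m + 4) * (m + 4)) * ((m + 3).choose a * (u + 1)) := by ring
          _ = ((m + 2) * (m + 4) * (m + 4)) * ((m + 3) * (m + 2).choose a) := by rw [c5]
          _ = ((m + 3) * ((m + 4) * (m + 4))) * ((m + 2) * (m + 2).choose a) := by ring
          _ ≤ ((m + 3) * ((m + 4) * (m + 4))) * 2 ^ (m + 2) := Nat.mul_le_mul le_rfl hAn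
          _ ≤ (4 * ((m + 2) * ((u + 1) * (u + 2)))) * 2 ^ (m + 2) := Nat.mul_le_mul q4 le_rfl
          _ = ((m + 2) * ((u + 1) * (u + 2))) * 2 ^ (m + 4) := by ring
      exact le_trans (Nat.mul_le_mul le_rfl mono) hub
  refine ⟨hf0, ?_, ?_, ?_, ?_, ?_⟩
  · rw [show m + 2 - 1 = m + 1 by omega]; exact hf1
  · rw [show m + 2 - 2 = m by omega]; exact hf2
  · rw [hL1, hf0]
  · rw [show m + 2 + 1 = m + 3 by omega, hL3, hf0]
  · rw [show m + 2 + 2 = m + 4 by omega, hL4, hf0]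
end

section
/- For every integer n ≥ 3, f(n+3) > f(n). -/
/-- monotonicity of choose in second argument below half -/
lemma mono2 (m j k : ℕ) (hjk : j ≤ k) (h : 2 * k ≤ m) : m.choose j ≤ m.choose k := by
  induction k with
  | zero => simp_all
  | succ K ih =>
    rcases Nat.lt_or_ge j (K+1) with h' | h'
    · have h1 : j ≤ K := by omega
      have h2 : K < m / 2 := by omega
      exact le_trans (ih h1 (by omega)) (Nat.choose_le_succ_of_lt_half_left h2)
    · have : j = K + 1 := by omega
      simp [this]

lemma middle_big (n : ℕ) (hn : 2 ≤ n) : 2 ^ n < (n + 1) * n.choose (n / 2) := by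
  have hsum := Nat.sum_range_choose n
  have hlt : ∑ m ∈ Finset.range (n + 1), n.choose m <
      ∑ _m ∈ Finset.range (n + 1), n.choose (n / 2) := by
    apply Finset.sum_lt_sum
    · intro i _; exact Nat.choose_le_middle i n
    · refine ⟨0, by simp, ?_⟩
      have h1 : n.choose 1 ≤ n.choose (n / 2) := Nat.choose_le_middle 1 n
      have h0 : n.choose 0 = 1 := Nat.choose_zero_right n
      have h2 : n.choose 1 = n := Nat.choose_one_right n
      omega
  simpa [hsum, Finset.sum_const, mul_comm] using hlt

lemma sq_le_two_pow (m : ℕ) (h : 6 ≤ m) : (m + 1) * m ≤ 2 ^ m := by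
  induction m with
  | zero => omega
  | succ M ih =>
    rcases Nat.lt_or_ge M 6 with h' | h'
    · have : M = 5 := by omega
      subst this; norm_num
    · have := ih h'
      have : 2 ^ (M + 1) = 2 * 2 ^ M := by ring
      nlinarith [ih h']

lemma step (n k : ℕ) (h2k : 2 * k ≤ n)
    (ih : (n + 1) * n.choose k ≤ 2 ^ n) : (n + 2) * (n + 1).choose k ≤ 2 ^ (n + 1) := by
  have e : n.choose k * (n + 1) = (n + 1).choose k * (n + 1 - k) := Nat.choose_mul_succ_eq n k
  have hpos : 0 < n + 1 - k := by omega
  apply Nat.le_of_mul_le_mul_right (c := n + 1 - k) _ hpos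
  calc (n + 2) * (n + 1).choose k * (n + 1 - k)
      = (n + 2) * ((n + 1).choose k * (n + 1 - k)) := by ring
    _ = (n + 2) * (n.choose k * (n + 1)) := by rw [e]
    _ = (n + 2) * ((n + 1) * n.choose k) := by ring
    _ ≤ (n + 2) * 2 ^ n := Nat.mul_le_mul_left _ ih
    _ ≤ (2 * (n + 1 - k)) * 2 ^ n := Nat.mul_le_mul_right _ (by omega)
    _ = 2 ^ (n + 1) * (n + 1 - k) := by ring

lemma diag (k : ℕ) (hk : 2 ≤ k) : (4 * k + 1) * (4 * k).choose k ≤ 2 ^ (4 * k) := by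
  induction k with
  | zero => omega
  | succ K ih =>
    rcases Nat.lt_or_ge K 2 with h' | h'
    · have : K = 1 := by omega
      subst this; decide
    · have IH := ih h'
      -- identities to go from C(4K, K) to C(4K+4, K+1)
      have e1 : (4 * K + 1) * (4 * K).choose K = (4 * K + 1).choose (K + 1) * (K + 1) :=
        Nat.add_one_mul_choose_eq (4 * K) K
      have e2 : (4 * K + 1).choose (K + 1) * (4 * K + 2) =
          (4 * K + 2).choose (K + 1) * (3 * K + 1) := by
        have := Nat.choose_mul_succ_eq (4 * K + 1) (K + 1)
        have hs : 4 * K + 1 + 1 - (K + 1) = 3 * K + 1 := by omega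
        rw [hs] at this
        convert this using 3 <;> omega
      have e3 : (4 * K + 2).choose (K + 1) * (4 * K + 3) =
          (4 * K + 3).choose (K + 1) * (3 * K + 2) := by
        have := Nat.choose_mul_succ_eq (4 * K + 2) (K + 1)
        have hs : 4 * K + 2 + 1 - (K + 1) = 3 * K + 2 := by omega
        rw [hs] at this
        convert this using 3 <;> omega
      have e4 : (4 * K + 3).choose (K + 1) * (4 * K + 4) =
          (4 * K + 4).choose (K + 1) * (3 * K + 3) := by
        have := Nat.choose_mul_succ_eq (4 * K + 3) (K + 1)
        have hs : 4 * K + 3 + 1 - (K + 1) = 3 * K + 3 := by omega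
        rw [hs] at this
        convert this using 3 <;> omega
      have key : (4 * K + 4).choose (K + 1) * ((K + 1) * ((3 * K + 1) * ((3 * K + 2) * (3 * K + 3))))
          = (4 * K + 1) * (4 * K).choose K * ((4 * K + 2) * ((4 * K + 3) * (4 * K + 4))) := by
        calc (4 * K + 4).choose (K + 1) * ((K + 1) * ((3 * K + 1) * ((3 * K + 2) * (3 * K + 3))))
            = ((4 * K + 4).choose (K + 1) * (3 * K + 3)) * ((K + 1) * ((3 * K + 1) * (3 * K + 2))) := by ring
          _ = ((4 * K + 3).choose (K + 1) * (4 * K + 4)) * ((K + 1) * ((3 * K + 1) * (3 * K + 2))) := by rw [e4]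
          _ = ((4 * K + 3).choose (K + 1) * (3 * K + 2)) * ((K + 1) * ((3 * K + 1) * (4 * K + 4))) := by ring
          _ = ((4 * K + 2).choose (K + 1) * (4 * K + 3)) * ((K + 1) * ((3 * K + 1) * (4 * K + 4))) := by rw [e3]
          _ = ((4 * K + 2).choose (K + 1) * (3 * K + 1)) * ((K + 1) * ((4 * K + 3) * (4 * K + 4))) := by ring
          _ = ((4 * K + 1).choose (K + 1) * (4 * K + 2)) * ((K + 1) * ((4 * K + 3) * (4 * K + 4))) := by rw [e2]
          _ = ((4 * K + 1).choose (K + 1) * (K + 1)) * ((4 * K + 2) * ((4 * K + 3) * (4 * K + 4))) := by ring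
          _ = ((4 * K + 1) * (4 * K).choose K) * ((4 * K + 2) * ((4 * K + 3) * (4 * K + 4))) := by rw [e1]
        
      have hgoal : 4 * (K + 1) = 4 * K + 4 := by ring
      rw [hgoal]
      have hpos : 0 < (K + 1) * ((3 * K + 1) * ((3 * K + 2) * (3 * K + 3))) := by positivity
      apply Nat.le_of_mul_le_mul_right (c := (K + 1) * ((3 * K + 1) * ((3 * K + 2) * (3 * K + 3)))) _ hpos
      calc (4 * K + 4 + 1) * (4 * K + 4).choose (K + 1) * ((K + 1) * ((3 * K + 1) * ((3 * K + 2) * (3 * K + 3))))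
          = (4 * K + 5) * ((4 * K + 1) * (4 * K).choose K * ((4 * K + 2) * ((4 * K + 3) * (4 * K + 4)))) := by
            rw [mul_assoc, key]; try ring
        _ ≤ (4 * K + 5) * (2 ^ (4 * K) * ((4 * K + 2) * ((4 * K + 3) * (4 * K + 4)))) := by
            apply Nat.mul_le_mul_left
            exact Nat.mul_le_mul_right _ IH
        _ = 2 ^ (4 * K) * ((4 * K + 5) * ((4 * K + 2) * ((4 * K + 3) * (4 * K + 4)))) := by ring
        _ ≤ 2 ^ (4 * K) * (16 * ((K + 1) * ((3 * K + 1) * ((3 * K + 2) * (3 * K + 3))))) := by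
            apply Nat.mul_le_mul_left
            nlinarith [h', sq_nonneg K]
        _ = 2 ^ (4 * K + 4) * ((K + 1) * ((3 * K + 1) * ((3 * K + 2) * (3 * K + 3)))) := by ring

lemma L2 (n k : ℕ) (hk : 1 ≤ k) (h4 : 4 * k ≤ n) (hn : 5 ≤ n) :
    (n + 1) * n.choose k ≤ 2 ^ n := by
  obtain ⟨d, hd⟩ : ∃ d, n = 4 * k + d := ⟨n - 4 * k, by omega⟩
  subst hd
  clear h4
  induction d with
  | zero =>
    have hk2 : 2 ≤ k := by omega
    simpa using diag k hk2
  | succ D ih =>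
    rcases Nat.lt_or_ge (4 * k + D) 5 with h' | h'
    · -- then 4k + D + 1 = 5, k = 1, D = 0
      have hk1 : k = 1 := by omega
      have hD : D = 0 := by omega
      subst hk1; subst hD; decide
    · have IH := ih h'
      have := step (4 * k + D) k (by omega) IH
      rw [show 4 * k + (D + 1) = 4 * k + D + 1 by omega]
      convert this using 2
      all_goals omega

lemma star (k c : ℕ) (hk : 2 ≤ k) (hc : c < 2 * k) (hn : 17 ≤ 2 * k + c) :
    (2 * k + c + 4) * (2 * k + c + 3) * (2 * k + c + 2) ≤
      8 * (k * ((k + c + 3) * (k + c + 2))) := by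
  nlinarith [sq_nonneg (2 * k - c), sq_nonneg k, sq_nonneg c, mul_le_mul_of_nonneg_left (le_of_lt hc) (Nat.zero_le k), Nat.mul_le_mul (Nat.mul_le_mul (le_refl k) hn) (le_refl 1)]

lemma key (n k : ℕ) (hn : 3 ≤ n) (hk : 1 ≤ k) (h2k : 2 * k ≤ n)
    (hmem : 2 ^ n < (n + 1) * n.choose k)
    (hmin : k = 1 ∨ (n + 1) * n.choose (k - 1) ≤ 2 ^ n) :
    (n + 4) * (n + 3).choose k ≤ 2 ^ (n + 3) := by
  rcases Nat.lt_or_ge k 2 with hk1 | hk2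
  · -- k = 1
    have : k = 1 := by omega
    subst this
    rw [Nat.choose_one_right]
    have h6 : 6 ≤ n + 3 := by omega
    have := sq_le_two_pow (n + 3) h6
    nlinarith [this]
  · have hmin' : (n + 1) * n.choose (k - 1) ≤ 2 ^ n := by
      rcases hmin with h | h
      · omega
      · exact h
    rcases Nat.lt_or_ge n (4 * k) with h4 | h4
    · -- main case n < 4k
      rcases Nat.lt_or_ge n 17 with h17 | h17
      · -- finite check: 3 ≤ n ≤ 16, 2 ≤ k, 2k ≤ n < 4k
        clear hmin
        have hub : k ≤ 8 := by omega
        interval_cases n <;> interval_cases k <;> revert hmem hmin' h2k h4 <;> decide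
      · -- large case
        obtain ⟨j, hj⟩ : ∃ j, k = j + 1 := ⟨k - 1, by omega⟩
        obtain ⟨c, hc⟩ : ∃ c, n = 2 * k + c := ⟨n - 2 * k, by omega⟩
        have e1 : (n + 1) * n.choose j = (n + 1).choose k * k := by
          rw [hj]; exact Nat.add_one_mul_choose_eq n j
        have e2 : (n + 1).choose k * (n + 2) = (n + 2).choose k * (k + c + 2) := by
          have := Nat.choose_mul_succ_eq (n + 1) k
          have hs : n + 1 + 1 - k = k + c + 2 := by omega
          rw [hs] at this
          convert this using 3
        have e3 : (n + 2).choose k * (n + 3) = (n + 3).choose k * (k + c + 3) := by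
          have := Nat.choose_mul_succ_eq (n + 2) k
          have hs : n + 2 + 1 - k = k + c + 3 := by omega
          rw [hs] at this
          convert this using 3
        have iden : (n + 3).choose k * (k * ((k + c + 3) * (k + c + 2)))
            = (n + 1) * n.choose j * ((n + 2) * (n + 3)) := by
          calc (n + 3).choose k * (k * ((k + c + 3) * (k + c + 2)))
              = ((n + 3).choose k * (k + c + 3)) * (k * (k + c + 2)) := by ring
            _ = ((n + 2).choose k * (n + 3)) * (k * (k + c + 2)) := by rw [e3]
            _ = ((n + 2).choose k * (k + c + 2)) * (k * (n + 3)) := by ring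
            _ = ((n + 1).choose k * (n + 2)) * (k * (n + 3)) := by rw [e2]
            _ = ((n + 1).choose k * k) * ((n + 2) * (n + 3)) := by ring
            _ = (n + 1) * n.choose j * ((n + 2) * (n + 3)) := by rw [e1]
        have hstar := star k c hk2 (by omega) (by omega)
        have hpos : 0 < k * ((k + c + 3) * (k + c + 2)) := by positivity
        apply Nat.le_of_mul_le_mul_right (c := k * ((k + c + 3) * (k + c + 2))) _ hpos
        have hj' : j = k - 1 := by omega
        calc (n + 4) * (n + 3).choose k * (k * ((k + c + 3) * (k + c + 2)))
            = (n + 4) * ((n + 3).choose k * (k * ((k + c + 3) * (k + c + 2)))) := by ring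
          _ = (n + 4) * ((n + 1) * n.choose j * ((n + 2) * (n + 3))) := by rw [iden]
          _ ≤ (n + 4) * (2 ^ n * ((n + 2) * (n + 3))) := by
              apply Nat.mul_le_mul_left
              apply Nat.mul_le_mul_right
              rw [hj']; exact hmin'
          _ = (n + 4) * (n + 3) * (n + 2) * 2 ^ n := by ring
          _ = (2 * k + c + 4) * (2 * k + c + 3) * (2 * k + c + 2) * 2 ^ n := by rw [hc]
          _ ≤ 8 * (k * ((k + c + 3) * (k + c + 2))) * 2 ^ n :=
              Nat.mul_le_mul_right _ hstar
          _ = 2 ^ (n + 3) * (k * ((k + c + 3) * (k + c + 2))) := by ring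
    · -- small k: contradiction with L2
      have h5 : 5 ≤ n := by omega
      have := L2 n k (by omega) h4 h5
      omega


lemma conv (m j : ℕ) : ((m.choose j : ℝ) > 2 ^ m / (m + 1)) ↔ 2 ^ m < (m + 1) * m.choose j := by
  rw [gt_iff_lt, div_lt_iff₀ (by positivity : (0:ℝ) < (m:ℝ) + 1)]
  rw [show ((m.choose j : ℝ)) * ((m:ℝ) + 1) = (((m + 1) * m.choose j : ℕ) : ℝ) by push_cast; ring]
  rw [show ((2:ℝ) ^ m) = (((2 ^ m : ℕ)) : ℝ) by push_cast; ring]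
  exact Nat.cast_lt

lemma f_mem_s9 (m : ℕ) (hm : 3 ≤ m) :
    0 < f m ∧ 2 ^ m < (m + 1) * m.choose (f m) ∧ f m ≤ m / 2 ∧
      (f m = 1 ∨ (m + 1) * m.choose (f m - 1) ≤ 2 ^ m) := by
  have hhalf : m / 2 ∈ {k : ℕ | 0 < k ∧ (m.choose k : ℝ) > 2 ^ m / (m + 1)} := by
    constructor
    · omega
    · rw [conv]
      exact middle_big m (by omega)
  have hmem : f m ∈ {k : ℕ | 0 < k ∧ (m.choose k : ℝ) > 2 ^ m / (m + 1)} :=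
    Nat.sInf_mem ⟨m / 2, hhalf⟩
  have hle : f m ≤ m / 2 := Nat.sInf_le hhalf
  obtain ⟨hpos, hgt⟩ := hmem
  rw [conv] at hgt
  refine ⟨hpos, hgt, hle, ?_⟩
  rcases Nat.lt_or_ge (f m) 2 with h | h
  · left; omega
  · right
    have hlt : f m - 1 < f m := by omega
    have hnot : f m - 1 ∉ {k : ℕ | 0 < k ∧ (m.choose k : ℝ) > 2 ^ m / (m + 1)} :=
      Nat.notMem_of_lt_sInf hlt
    rw [Set.mem_setOf_eq] at hnot
    rw [conv] at hnot
    push_neg at hnot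
    have := hnot (by omega)
    omega

theorem f_add_three_gt (n : ℕ) (hn : 3 ≤ n) : f (n + 3) > f n := by
  obtain ⟨hkpos, hkmem, hkle, hmin⟩ := f_mem_s9 n hn
  have h2k : 2 * f n ≤ n := by omega
  have hkey := key n (f n) hn (by omega) h2k hkmem hmin
  obtain ⟨hpos3, hmem3, hle3, -⟩ := f_mem_s9 (n + 3) (by omega)
  by_contra hcon
  push_neg at hcon
  have hmono : (n + 3).choose (f (n + 3)) ≤ (n + 3).choose (f n) :=
    mono2 (n + 3) (f (n + 3)) (f n) hcon (by omega)
  have hlt : 2 ^ (n + 3) < (n + 3 + 1) * (n + 3).choose (f n) :=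
    lt_of_lt_of_le hmem3 (Nat.mul_le_mul_left _ hmono)
  have heq : n + 3 + 1 = n + 4 := by omega
  rw [heq] at hlt
  omega
end

section
/- For every positive integer m, the binomial coefficient satisfies C(3m, m) < (27/4)^m = 2^{3m} · (27/32)^m. -/
open Finset in
theorem choose_three_m_lt (m : ℕ) (hm : 1 ≤ m) :
    ((3 * m).choose m : ℝ) < (27 / 4) ^ m ∧
    ((27 : ℝ) / 4) ^ m = 2 ^ (3 * m) * (27 / 32) ^ m := by
  constructor
  · have hexp : ((1 : ℝ)/2 + 1) ^ (3 * m) =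
        ∑ k ∈ range (3 * m + 1), (1/2 : ℝ) ^ k * 1 ^ (3 * m - k) * ((3 * m).choose k) :=
      add_pow _ _ _
    set f : ℕ → ℝ := fun k => (1/2 : ℝ) ^ k * 1 ^ (3 * m - k) * ((3 * m).choose k) with hf
    have hm_mem : m ∈ range (3 * m + 1) := by
      apply Finset.mem_range.2; omega
    have h0 : (0 : ℕ) ∈ range (3 * m + 1) := Finset.mem_range.2 (by omega)
    have hlt : f m < ∑ k ∈ range (3 * m + 1), f k := by
      apply Finset.single_lt_sum (j := 0) (by omega) hm_mem h0
      · simp [hf]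
      · intro k _ _
        have : (0:ℝ) ≤ ((3*m).choose k : ℝ) := Nat.cast_nonneg _
        positivity
    have key : f m < (3/2 : ℝ) ^ (3 * m) := by
      rw [show (3/2:ℝ) = 1/2 + 1 by norm_num, hexp]; exact hlt
    have hfm : f m = (1/2 : ℝ) ^ m * ((3 * m).choose m) := by simp [hf]
    have h2 : ((3 * m).choose m : ℝ) = f m * 2 ^ m := by
      rw [hfm]; field_simp; rw [mul_assoc, ← mul_pow]; norm_num
    rw [h2]
    calc f m * 2 ^ m < (3/2 : ℝ) ^ (3 * m) * 2 ^ m := by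
          apply mul_lt_mul_of_pos_right key (by positivity)
      _ = (27/4 : ℝ) ^ m := by
          rw [show 3 * m = m * 3 by ring, pow_mul, pow_right_comm, ← mul_pow]; norm_num
  · rw [show 3 * m = m * 3 by ring, pow_mul, pow_right_comm, ← mul_pow]; norm_num
end

section
/- For every integer n ≥ 88, f(n) ≥ ⌈n/3⌉ + 1. -/
lemma choose_step (n m : ℕ) :
    (n+3).choose (m+1) * ((m+1) * ((n+1-m) * (n+2-m))) =
      n.choose m * ((n+1) * ((n+2) * (n+3))) := by
  have h1 : (n+3) * (n+2).choose m = (n+3).choose (m+1) * (m+1) :=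
    Nat.add_one_mul_choose_eq (n+2) m
  have h2 : (n+1).choose m * (n+2) = (n+2).choose m * (n+2-m) :=
    Nat.choose_mul_succ_eq (n+1) m
  have h3 : n.choose m * (n+1) = (n+1).choose m * (n+1-m) :=
    Nat.choose_mul_succ_eq n m
  calc (n+3).choose (m+1) * ((m+1) * ((n+1-m) * (n+2-m)))
      = ((n+3).choose (m+1) * (m+1)) * ((n+2-m) * (n+1-m)) := by ring
    _ = ((n+3) * (n+2).choose m) * ((n+2-m) * (n+1-m)) := by rw [h1]
    _ = ((n+2).choose m * (n+2-m)) * ((n+3) * (n+1-m)) := by ring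
    _ = ((n+1).choose m * (n+2)) * ((n+3) * (n+1-m)) := by rw [h2]
    _ = ((n+1).choose m * (n+1-m)) * ((n+2) * (n+3)) := by ring
    _ = (n.choose m * (n+1)) * ((n+2) * (n+3)) := by rw [h3]
    _ = n.choose m * ((n+1) * ((n+2) * (n+3))) := by ring

lemma cubic_ineq (n m : ℕ) (hn : 88 ≤ n) (h1 : n ≤ 3*m) (h2 : 3*m ≤ n+2) :
    (n+4) * ((n+2) * (n+3)) ≤ 8 * ((m+1) * ((n+1-m) * (n+2-m))) := by
  have hm1 : m ≤ n + 1 := by omega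
  have hm2 : m ≤ n + 2 := by omega
  zify [hm1, hm2]
  have hA : (0:ℤ) ≤ 3*(m:ℤ) - n := by exact_mod_cast by omega
  have hB : (0:ℤ) ≤ (n:ℤ) + 2 - 3*m := by exact_mod_cast by omega
  have hn' : (88:ℤ) ≤ n := by exact_mod_cast hn
  nlinarith [mul_nonneg hA hB, mul_nonneg (mul_nonneg hA hB) (by linarith : (0:ℤ) ≤ (n:ℤ)),
    mul_nonneg (mul_nonneg hA hA) hA, mul_nonneg (mul_nonneg hB hB) hB,
    mul_nonneg (mul_nonneg hA hA) hB, mul_nonneg (mul_nonneg hA hB) hB,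
    mul_nonneg hA (by linarith : (0:ℤ) ≤ (n:ℤ) - 88), mul_nonneg hB (by linarith : (0:ℤ) ≤ (n:ℤ) - 88),
    mul_nonneg (mul_nonneg (by linarith : (0:ℤ) ≤ (n:ℤ) - 88) (by linarith : (0:ℤ) ≤ (n:ℤ) - 88)) (by linarith : (0:ℤ) ≤ (n:ℤ) - 88),
    sq_nonneg ((n:ℤ) - 88), sq_nonneg (3*(m:ℤ) - n), sq_nonneg ((n:ℤ) + 2 - 3*m)]

lemma base88 : 89 * Nat.choose 88 30 ≤ 2 ^ 88 := by
  have h : Nat.choose 88 30 = 297489479369949289157856 := by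
    rw [Nat.choose_eq_descFactorial_div_factorial]; rfl
  rw [h]; norm_num

lemma base89 : 90 * Nat.choose 89 30 ≤ 2 ^ 89 := by
  have h : Nat.choose 89 30 = 448755316337720114153376 := by
    rw [Nat.choose_eq_descFactorial_div_factorial]; rfl
  rw [h]; norm_num

lemma base90 : 91 * Nat.choose 90 30 ≤ 2 ^ 90 := by
  have h : Nat.choose 90 30 = 673132974506580171230064 := by
    rw [Nat.choose_eq_descFactorial_div_factorial]; rfl
  rw [h]; norm_num

lemma key_s17 : ∀ k : ℕ, (88 + k + 1) * (88 + k).choose ((88 + k + 2) / 3) ≤ 2 ^ (88 + k) := by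
  intro k
  induction k using Nat.strong_induction_on with
  | _ k ih =>
    match k, ih with
    | 0, _ => simpa using base88
    | 1, _ => simpa using base89
    | 2, _ => simpa using base90
    | (j+3), ih =>
      have IH := ih j (by omega)
      set n := 88 + j with hn
      have hmeq : (n + 3 + 2) / 3 = (n + 2) / 3 + 1 := by omega
      set m := (n + 2) / 3 with hm
      have h3m1 : n ≤ 3 * m := by omega
      have h3m2 : 3 * m ≤ n + 2 := by omega
      have hnn : 88 + (j + 3) = n + 3 := by omega
      rw [hnn, hmeq]
      -- goal : (n+3+1) * (n+3).choose (m+1) ≤ 2 ^ (n+3)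
      have hid := choose_step n m
      have hineq := cubic_ineq n m (by omega) h3m1 h3m2
      have hP : 0 < (m+1) * ((n+1-m) * (n+2-m)) :=
        Nat.mul_pos (by omega) (Nat.mul_pos (by omega) (by omega))
      set P := (m+1) * ((n+1-m) * (n+2-m)) with hPdef
      have key2 : (n + 3 + 1) * (n+3).choose (m+1) * P ≤ 2 ^ (n + 3) * P := by
        calc (n + 3 + 1) * (n+3).choose (m+1) * P
            = (n + 4) * (n.choose m * ((n+1) * ((n+2) * (n+3)))) := by
              rw [← hid]; ring
          _ = ((n+4) * ((n+2) * (n+3))) * ((n+1) * n.choose m) := by ring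
          _ ≤ (8 * P) * ((n+1) * n.choose m) := by
              exact Nat.mul_le_mul_right _ hineq
          _ ≤ (8 * P) * 2 ^ n := by
              exact Nat.mul_le_mul_left _ IH
          _ = 2 ^ (n + 3) * P := by ring
      exact Nat.le_of_mul_le_mul_right key2 hP

lemma choose_mono_k {n a b : ℕ} (hab : a ≤ b) (hb : b ≤ n / 2) :
    n.choose a ≤ n.choose b := by
  induction b, hab using Nat.le_induction with
  | base => exact le_rfl
  | succ k hk ih =>
    exact (ih (by omega)).trans (Nat.choose_le_succ_of_lt_half_left (by omega))

lemma half_mem (n : ℕ) (hn : 88 ≤ n) : 2 ^ n < (n + 1) * n.choose (n / 2) := by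
  rcases Nat.even_or_odd n with ⟨t, ht⟩ | ⟨t, ht⟩
  · have h4 : 4 ^ t < t * Nat.centralBinom t :=
      Nat.four_pow_lt_mul_centralBinom t (by omega)
    have hc : Nat.centralBinom t = (2 * t).choose t := rfl
    have h2 : n / 2 = t := by omega
    have hpow : 2 ^ n = 4 ^ t := by
      have : n = 2 * t := by omega
      rw [this, pow_mul]; norm_num
    rw [hpow, h2]
    have : (2 * t).choose t = n.choose t := by rw [show 2 * t = n by omega]
    calc 4 ^ t < t * Nat.centralBinom t := h4
      _ = t * n.choose t := by rw [hc, this]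
      _ ≤ (n + 1) * n.choose t := Nat.mul_le_mul_right _ (by omega)
  · have h4 : 4 ^ t < t * Nat.centralBinom t :=
      Nat.four_pow_lt_mul_centralBinom t (by omega)
    have hc : Nat.centralBinom t = (2 * t).choose t := rfl
    have h2 : n / 2 = t := by omega
    have hmono : (2 * t).choose t ≤ n.choose t :=
      Nat.choose_le_choose t (by omega)
    have hpow : 2 ^ n = 2 * 4 ^ t := by
      have : n = 2 * t + 1 := by omega
      rw [this, pow_succ, pow_mul]; ring_nf
    rw [hpow, h2]
    calc 2 * 4 ^ t < 2 * (t * Nat.centralBinom t) := by omega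
      _ = (2 * t) * ((2 * t).choose t) := by rw [hc]; ring
      _ ≤ (n + 1) * n.choose t := Nat.mul_le_mul (by omega) hmono

theorem f_ge_ceil_third (n : ℕ) (hn : 88 ≤ n) : f n ≥ (n + 2) / 3 + 1 := by
  have hnp : (0:ℝ) < (n:ℝ) + 1 := by positivity
  have hhalf : n / 2 ∈ {k : ℕ | 0 < k ∧ (n.choose k : ℝ) > 2 ^ n / (n + 1)} := by
    refine ⟨by omega, ?_⟩
    rw [gt_iff_lt, div_lt_iff₀ hnp]
    have := half_mem n hn
    calc (2:ℝ) ^ n = ((2 ^ n : ℕ) : ℝ) := by push_cast; ring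
      _ < (((n + 1) * n.choose (n / 2) : ℕ) : ℝ) := by exact_mod_cast this
      _ = (n.choose (n / 2) : ℝ) * ((n:ℝ) + 1) := by push_cast; ring
  have hne : Set.Nonempty {k : ℕ | 0 < k ∧ (n.choose k : ℝ) > 2 ^ n / (n + 1)} :=
    ⟨_, hhalf⟩
  have hmem := Nat.sInf_mem hne
  have hf : f n = sInf {k : ℕ | 0 < k ∧ (n.choose k : ℝ) > 2 ^ n / (n + 1)} := rfl
  rw [ge_iff_le, hf]
  by_contra hcon
  push_neg at hcon
  set j := sInf {k : ℕ | 0 < k ∧ (n.choose k : ℝ) > 2 ^ n / (n + 1)} with hj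
  obtain ⟨hj0, hjR⟩ := hmem
  have hkey : (n + 1) * n.choose ((n + 2) / 3) ≤ 2 ^ n := by
    have := key_s17 (n - 88)
    rwa [show 88 + (n - 88) = n by omega] at this
  have hmono : n.choose j ≤ n.choose ((n + 2) / 3) :=
    choose_mono_k (by omega) (by omega)
  have : (n.choose j : ℝ) ≤ 2 ^ n / ((n:ℝ) + 1) := by
    rw [le_div_iff₀ hnp]
    calc (n.choose j : ℝ) * ((n:ℝ) + 1)
        = (((n + 1) * n.choose j : ℕ) : ℝ) := by push_cast; ring
      _ ≤ (((n + 1) * n.choose ((n + 2) / 3) : ℕ) : ℝ) := by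
          exact_mod_cast Nat.mul_le_mul_left _ hmono
      _ ≤ ((2 ^ n : ℕ) : ℝ) := by exact_mod_cast hkey
      _ = (2:ℝ) ^ n := by push_cast; ring
  exact absurd hjR (not_lt.mpr this)
end

section
/- Let n ≥ 88 be an integer and suppose f(n) ≥ ⌈n/3⌉ + 1. Then C(n+3, f(n)) < 2^{n+3}/(n+4); in particular f(n+3) > f(n) for n ≥ 88. -/
lemma pow_lt_mul_choose_half (N : ℕ) (hN : 8 ≤ N) :
    2 ^ N < (N + 1) * N.choose (N / 2) := by
  rcases Nat.even_or_odd N with ⟨t, ht⟩ | ⟨t, ht⟩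
  · have ht4 : 4 ≤ t := by omega
    have h := Nat.four_pow_lt_mul_centralBinom t ht4
    rw [Nat.centralBinom] at h
    have h2 : N / 2 = t := by omega
    have hN2 : N = 2 * t := by omega
    rw [h2, hN2]
    calc 2 ^ (2 * t) = 4 ^ t := by
          rw [pow_mul]; norm_num
      _ < t * (2 * t).choose t := h
      _ ≤ (2 * t + 1) * (2 * t).choose t :=
          Nat.mul_le_mul_right _ (by omega)
  · have ht4 : 4 ≤ t := by omega
    have h := Nat.four_pow_lt_mul_centralBinom t ht4
    rw [Nat.centralBinom] at h
    have h2 : N / 2 = t := by omega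
    have hN2 : N = 2 * t + 1 := by omega
    have hmono : (2 * t).choose t ≤ (2 * t + 1).choose t :=
      Nat.choose_le_choose t (by omega)
    rw [h2, hN2]
    calc 2 ^ (2 * t + 1) = 2 * 4 ^ t := by
          rw [pow_succ, pow_mul]; ring_nf
      _ < 2 * (t * (2 * t).choose t) := by omega
      _ ≤ (2 * t + 1 + 1) * (2 * t).choose t := by
          rw [← Nat.mul_assoc]; exact Nat.mul_le_mul_right _ (by omega)
      _ ≤ (2 * t + 1 + 1) * (2 * t + 1).choose t :=
          Nat.mul_le_mul_left _ hmono

lemma half_mem_s18 (N : ℕ) (hN : 8 ≤ N) :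
    N / 2 ∈ {k : ℕ | 0 < k ∧ (N.choose k : ℝ) > 2 ^ N / (N + 1)} := by
  refine ⟨by omega, ?_⟩
  have h := pow_lt_mul_choose_half N hN
  have hpos : (0 : ℝ) < (N : ℝ) + 1 := by positivity
  rw [gt_iff_lt, div_lt_iff₀ hpos]
  have : (2 : ℝ) ^ N < ((N : ℝ) + 1) * (N.choose (N / 2) : ℝ) := by
    exact_mod_cast h
  linarith

lemma key_id (n m : ℕ) :
    (m + 1) * (n + 1 - m) * (n + 2 - m) * (n + 3).choose (m + 1)
      = (n + 1) * (n + 2) * (n + 3) * n.choose m := by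
  have h1 : (n + 1) * n.choose m = (n + 1).choose (m + 1) * (m + 1) :=
    Nat.add_one_mul_choose_eq n m
  have h2 : (n + 1).choose (m + 1) * (n + 2) = (n + 2).choose (m + 1) * (n + 1 - m) := by
    have h := Nat.choose_mul_succ_eq (n + 1) (m + 1)
    rwa [show n + 1 + 1 - (m + 1) = n + 1 - m from by omega] at h
  have h3 : (n + 2).choose (m + 1) * (n + 3) = (n + 3).choose (m + 1) * (n + 2 - m) := by
    have h := Nat.choose_mul_succ_eq (n + 2) (m + 1)
    rwa [show n + 2 + 1 - (m + 1) = n + 2 - m from by omega] at h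
  calc (m + 1) * (n + 1 - m) * (n + 2 - m) * (n + 3).choose (m + 1)
      = (m + 1) * ((n + 1 - m) * ((n + 3).choose (m + 1) * (n + 2 - m))) := by ring
    _ = (m + 1) * ((n + 1 - m) * ((n + 2).choose (m + 1) * (n + 3))) := by rw [← h3]
    _ = (m + 1) * (n + 3) * ((n + 2).choose (m + 1) * (n + 1 - m)) := by ring
    _ = (m + 1) * (n + 3) * ((n + 1).choose (m + 1) * (n + 2)) := by rw [← h2]
    _ = (n + 2) * (n + 3) * ((n + 1).choose (m + 1) * (m + 1)) := by ring
    _ = (n + 2) * (n + 3) * ((n + 1) * n.choose m) := by rw [← h1]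
    _ = (n + 1) * (n + 2) * (n + 3) * n.choose m := by ring

lemma choose_mono_left {N k j : ℕ} (hkj : k ≤ j) (hj : j ≤ N / 2) :
    N.choose k ≤ N.choose j := by
  induction j with
  | zero => simp [Nat.le_zero.mp hkj]
  | succ j ih =>
    rcases Nat.lt_or_ge k (j + 1) with h | h
    · exact le_trans (ih (by omega) (by omega))
        (Nat.choose_le_succ_of_lt_half_left (by omega))
    · have : k = j + 1 := by omega
      rw [this]

theorem choose_add_three_lt (n : ℕ) (hn : 88 ≤ n) (hf : f n ≥ (n + 2) / 3 + 1) :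
    ((n + 3).choose (f n) : ℝ) < 2 ^ (n + 3) / (n + 4) ∧ f (n + 3) > f n := by
  have hSne : {k : ℕ | 0 < k ∧ (n.choose k : ℝ) > 2 ^ n / (n + 1)}.Nonempty :=
    ⟨n / 2, half_mem_s18 n (by omega)⟩
  have ha_mem : f n ∈ {k : ℕ | 0 < k ∧ (n.choose k : ℝ) > 2 ^ n / (n + 1)} :=
    Nat.sInf_mem hSne
  have ha_le : f n ≤ n / 2 := Nat.sInf_le (half_mem_s18 n (by omega))
  obtain ⟨ha_pos, -⟩ := ha_mem
  set m : ℕ := f n - 1 with hm_def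
  have ham : f n = m + 1 := by omega
  have hm_lt : m < f n := by omega
  have hm_not : m ∉ {k : ℕ | 0 < k ∧ (n.choose k : ℝ) > 2 ^ n / (n + 1)} :=
    Nat.notMem_of_lt_sInf hm_lt
  have hm_pos : 0 < m := by omega
  have hCm : (n.choose m : ℝ) ≤ 2 ^ n / (n + 1) := by
    by_contra h
    exact hm_not ⟨hm_pos, by push_neg at h; exact h⟩
  -- arithmetic bounds
  have h3m : n ≤ 3 * m := by omega
  have h2m : 2 * m + 2 ≤ n := by omega
  have hmn : m ≤ n := by omega
  -- real versions
  have hs : (0 : ℝ) ≤ 3 * (m : ℝ) - (n : ℝ) := by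
    have : (n : ℝ) ≤ 3 * m := by exact_mod_cast h3m
    linarith
  have htt : (0 : ℝ) ≤ (n : ℝ) - 2 * m - 2 := by
    have : (2 * m + 2 : ℝ) ≤ n := by exact_mod_cast h2m
    linarith
  have hn' : (88 : ℝ) ≤ (n : ℝ) := by exact_mod_cast hn
  have key : ((n : ℝ) + 2) * ((n : ℝ) + 3) * ((n : ℝ) + 4)
      < 8 * (((m : ℝ) + 1) * ((n : ℝ) + 1 - m) * ((n : ℝ) + 2 - m)) := by
    nlinarith [mul_nonneg hs htt, mul_nonneg (mul_nonneg hs hs) htt,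
      mul_nonneg (mul_nonneg hs htt) htt, mul_nonneg hs hs, mul_nonneg htt htt,
      mul_nonneg (mul_nonneg htt htt) htt]
  have hD_pos : (0 : ℝ) < ((m : ℝ) + 1) * ((n : ℝ) + 1 - m) * ((n : ℝ) + 2 - m) := by
    have h1 : (0 : ℝ) < (m : ℝ) + 1 := by positivity
    have h2 : (0 : ℝ) < (n : ℝ) + 1 - m := by
      have : (m : ℝ) ≤ n := by exact_mod_cast hmn
      linarith
    have h3 : (0 : ℝ) < (n : ℝ) + 2 - m := by linarith
    positivity
  -- cast the identity
  have hid := key_id n m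
  have hidR : ((m : ℝ) + 1) * ((n : ℝ) + 1 - m) * ((n : ℝ) + 2 - m)
      * ((n + 3).choose (m + 1) : ℝ)
      = ((n : ℝ) + 1) * ((n : ℝ) + 2) * ((n : ℝ) + 3) * (n.choose m : ℝ) := by
    have := congrArg (fun x : ℕ => (x : ℝ)) hid
    push_cast [Nat.cast_sub (show m ≤ n + 1 by omega),
      Nat.cast_sub (show m ≤ n + 2 by omega)] at this
    convert this using 2 <;> push_cast <;> ring
  have h2n : (0 : ℝ) < 2 ^ n := by positivity
  have hn1 : (0 : ℝ) < (n : ℝ) + 1 := by positivity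
  have hn4 : (0 : ℝ) < (n : ℝ) + 4 := by positivity
  have hCm' : (n.choose m : ℝ) * ((n : ℝ) + 1) ≤ 2 ^ n := by
    rw [← le_div_iff₀ hn1]; exact hCm
  have hpow : (2 : ℝ) ^ (n + 3) = 2 ^ n * 8 := by
    rw [pow_add]; norm_num
  have P : (((m : ℝ) + 1) * ((n : ℝ) + 1 - m) * ((n : ℝ) + 2 - m))
      * (((n + 3).choose (m + 1) : ℝ) * ((n : ℝ) + 4))
      < (((m : ℝ) + 1) * ((n : ℝ) + 1 - m) * ((n : ℝ) + 2 - m)) * 2 ^ (n + 3) := by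
    calc (((m : ℝ) + 1) * ((n : ℝ) + 1 - m) * ((n : ℝ) + 2 - m))
        * (((n + 3).choose (m + 1) : ℝ) * ((n : ℝ) + 4))
        = (((n : ℝ) + 1) * ((n : ℝ) + 2) * ((n : ℝ) + 3) * (n.choose m : ℝ))
            * ((n : ℝ) + 4) := by
          rw [← hidR]; ring
      _ = (((n : ℝ) + 2) * ((n : ℝ) + 3) * ((n : ℝ) + 4)) * ((n.choose m : ℝ) * ((n : ℝ) + 1)) := by
          ring
      _ ≤ (((n : ℝ) + 2) * ((n : ℝ) + 3) * ((n : ℝ) + 4)) * 2 ^ n := by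
          apply mul_le_mul_of_nonneg_left hCm'
          positivity
      _ < (8 * (((m : ℝ) + 1) * ((n : ℝ) + 1 - m) * ((n : ℝ) + 2 - m))) * 2 ^ n :=
          mul_lt_mul_of_pos_right key h2n
      _ = (((m : ℝ) + 1) * ((n : ℝ) + 1 - m) * ((n : ℝ) + 2 - m)) * 2 ^ (n + 3) := by
          rw [hpow]; ring
  have part1 : ((n + 3).choose (f n) : ℝ) < 2 ^ (n + 3) / ((n : ℝ) + 4) := by
    rw [ham, lt_div_iff₀ hn4]
    exact lt_of_mul_lt_mul_left P (le_of_lt hD_pos)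
  refine ⟨part1, ?_⟩
  -- second part
  by_contra hcon
  push_neg at hcon
  have hb_mem : f (n + 3) ∈ {k : ℕ | 0 < k ∧
      ((n + 3).choose k : ℝ) > 2 ^ (n + 3) / (((n + 3 : ℕ) : ℝ) + 1)} :=
    Nat.sInf_mem ⟨(n + 3) / 2, half_mem_s18 (n + 3) (by omega)⟩
  obtain ⟨hb_pos, hb_gt⟩ := hb_mem
  have hmono : (n + 3).choose (f (n + 3)) ≤ (n + 3).choose (f n) :=
    choose_mono_left hcon (by omega)
  have hmonoR : ((n + 3).choose (f (n + 3)) : ℝ) ≤ ((n + 3).choose (f n) : ℝ) := by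
    exact_mod_cast hmono
  have hcast : (((n + 3 : ℕ) : ℝ) + 1) = (n : ℝ) + 4 := by push_cast; ring
  rw [gt_iff_lt, hcast] at hb_gt
  linarith
end
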